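/- Let 𝕏 = {(x, y) ∈ ℝ² : |y| ≤ |sin x|} with the subspace topology, and let (x₀, y₀) ∈ 𝕏 with x₀ not an integer multiple of π. Then (x₀, y₀) satisfies local 1-componency in 𝕏: for every open neighborhood U of (x₀, y₀) in 𝕏, there is an open neighborhood N ⊆ U of (x₀, y₀) such that N \ {(x₀, y₀)} is connected. -/

import Mathlib

open Real Set

/-- Lipschitz bound for sine. -/
lemma sin_lip (x y : ℝ) : |Real.sin x - Real.sin y| ≤ |x - y| := by
  rw [Real.sin_sub_sin]
  calc |2 * Real.sin ((x - y) / 2) * Real.cos ((x + y) / 2)|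
      = 2 * |Real.sin ((x - y) / 2)| * |Real.cos ((x + y) / 2)| := by
        rw [abs_mul, abs_mul]; norm_num
    _ ≤ 2 * |(x - y) / 2| * 1 := by
        apply mul_le_mul (by have := Real.abs_sin_le_abs (x := (x-y)/2); nlinarith)
          (Real.abs_cos_le_one _) (abs_nonneg _) (by positivity)
    _ = |x - y| := by rw [abs_div, abs_two]; ring

/-- A convex set in the plane minus a point off a vertical chord is path connected. -/
lemma punctured_convex (K : Set (ℝ × ℝ)) (hK : Convex ℝ K) (c P₁ P₂ : ℝ × ℝ)
    (h₁ : P₁ ∈ K) (h₂ : P₂ ∈ K) (hx : P₁.1 = P₂.1) (hy : P₁.2 ≠ P₂.2)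
    (hc : c.1 ≠ P₁.1) : IsPathConnected (K \ {c}) := by
  have hcP₁ : P₁ ∈ K \ {c} := ⟨h₁, fun h => hc (by rw [Set.mem_singleton_iff] at h; rw [h])⟩
  have hcP₂ : P₂ ∈ K \ {c} := ⟨h₂, fun h => hc (by rw [Set.mem_singleton_iff] at h; rw [← h, ← hx])⟩
  -- joining along a segment avoiding c
  have segJoin : ∀ x y : ℝ × ℝ, x ∈ K \ {c} → y ∈ K \ {c} →
      (c ∉ segment ℝ x y) → JoinedIn (K \ {c}) x y := by
    intro x y hxm hym hcs
    have hsub : segment ℝ x y ⊆ K \ {c} := by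
      intro z hz
      refine ⟨hK.segment_subset hxm.1 hym.1 hz, ?_⟩
      intro h; rw [Set.mem_singleton_iff] at h; subst h; exact hcs hz
    exact (((convex_segment x y).isPathConnected ⟨x, left_mem_segment ℝ x y⟩).joinedIn
      x (left_mem_segment ℝ x y) y (right_mem_segment ℝ x y)).mono hsub
  -- c is not on the chord P₁ P₂
  have hchord : c ∉ segment ℝ P₁ P₂ := by
    intro hcs
    obtain ⟨a, b, ha, hb, hab, hz⟩ := hcs
    apply hc
    have : c.1 = a * P₁.1 + b * P₂.1 := by rw [← hz]; rfl
    rw [this, ← hx]; linear_combination P₁.1 * hab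
  have hJ₂₁ : JoinedIn (K \ {c}) P₂ P₁ := by
    apply segJoin _ _ hcP₂ hcP₁
    rw [segment_symm]; exact hchord
  refine ⟨P₁, hcP₁, ?_⟩
  intro q hq
  by_cases hseg : c ∈ segment ℝ P₁ q
  · -- go via P₂
    have hseg2 : c ∉ segment ℝ P₂ q := by
      intro hseg2
      obtain ⟨a, b, ha, hb, hab, hz⟩ := hseg
      obtain ⟨a', b', ha', hb', hab', hz'⟩ := hseg2
      have e1 : c.1 = a * P₁.1 + b * q.1 := by rw [← hz]; rfl
      have e2 : c.2 = a * P₁.2 + b * q.2 := by rw [← hz]; rfl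
      have e1' : c.1 = a' * P₂.1 + b' * q.1 := by rw [← hz']; rfl
      rw [← hx] at e1'
      have e2' : c.2 = a' * P₂.2 + b' * q.2 := by rw [← hz']; rfl
      -- case on whether q.1 = P₁.1
      by_cases hq1 : q.1 = P₁.1
      · apply hc; rw [e1, hq1]; linear_combination P₁.1 * hab
      · have hbb : b = b' := by
          have h := e1.symm.trans e1'
          have : (b - b') * (q.1 - P₁.1) = 0 := by linear_combination h - P₁.1 * hab + P₁.1 * hab'
          rcases mul_eq_zero.1 this with h' | h'
          · linarith
          · exact absurd (by linarith) hq1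
        have haa : a = a' := by linarith
        have hb0 : a = 0 := by
          have h := e2.symm.trans e2'
          rw [← hbb, ← haa] at h
          have : a * (P₁.2 - P₂.2) = 0 := by linear_combination h
          rcases mul_eq_zero.1 this with h' | h'
          · exact h'
          · exact absurd (by linarith) hy
        -- then c = q
        have : c = q := by
          have : b = 1 := by linarith
          apply Prod.ext <;> simp [e1, e2, hb0, this]
        exact hq.2 (by rw [Set.mem_singleton_iff, this])
    have h1 : JoinedIn (K \ {c}) P₂ q := segJoin _ _ hcP₂ hq hseg2
    exact hJ₂₁.symm.trans h1
  · exact segJoin _ _ hcP₁ hq hseg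

/-- The space `𝕏 = {(x, y) ∈ ℝ² : |y| ≤ |sin x|}` with the subspace topology. -/
def BraidSpace : Type := {p : ℝ × ℝ // |p.2| ≤ |Real.sin p.1|}

instance : TopologicalSpace BraidSpace := instTopologicalSpaceSubtype

set_option maxHeartbeats 1000000 in
theorem braidSpace_locally_one_component_away_from_pinch (p : BraidSpace)
    (hp : ∀ n : ℤ, p.1.1 ≠ n * Real.pi) :
    ∀ U : Set BraidSpace, IsOpen U → p ∈ U →
      ∃ N : Set BraidSpace, IsOpen N ∧ p ∈ N ∧ N ⊆ U ∧ IsConnected (N \ {p}) := by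
  intro U hU hpU
  set x₀ := p.1.1 with hx₀
  set y₀ := p.1.2 with hy₀
  have hsin0 : Real.sin x₀ ≠ 0 := Real.sin_ne_zero_iff.2 (fun n h => hp n h.symm)
  set m := |Real.sin x₀| with hm_def
  have hm : 0 < m := abs_pos.2 hsin0
  -- get a ball inside U
  obtain ⟨V, hVopen, hVU⟩ := isOpen_induced_iff.1 hU
  have hpV : p.1 ∈ V := by rw [← hVU] at hpU; exact hpU
  obtain ⟨ε, hε, hball⟩ := Metric.isOpen_iff.1 hVopen p.1 hpV
  set η := ε / 2 with hη_def
  have hηpos : 0 < η := by positivity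
  set δ := min (ε / 2) (min (m / 2) (ε * m / (2 * (|y₀| + 1)))) with hδ_def
  have hδpos : 0 < δ := by
    apply lt_min (by positivity) (lt_min (by positivity) (by positivity))
  have hδε : δ ≤ ε / 2 := min_le_left _ _
  have hδm : δ ≤ m / 2 := le_trans (min_le_right _ _) (min_le_left _ _)
  have hδy : δ ≤ ε * m / (2 * (|y₀| + 1)) := le_trans (min_le_right _ _) (min_le_right _ _)
  -- sin does not vanish near x₀
  have hsnz : ∀ x : ℝ, |x - x₀| < δ → Real.sin x ≠ 0 := by
    intro x hxd h0
    have h := sin_lip x x₀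
    rw [h0, zero_sub, abs_neg] at h
    have : m ≤ |x - x₀| := h
    linarith
  set V' : Set (ℝ × ℝ) := {q : ℝ × ℝ | |q.1 - x₀| < δ ∧
    |q.2 * Real.sin x₀ - y₀ * Real.sin q.1| < η * |Real.sin q.1 * Real.sin x₀|} with hV'_def
  have hV'open : IsOpen V' := by
    apply IsOpen.and
    · exact isOpen_lt (by fun_prop) continuous_const
    · exact isOpen_lt (by fun_prop) (by fun_prop)
  set N : Set BraidSpace := Subtype.val ⁻¹' V' with hN_def
  have hNopen : IsOpen N := hV'open.preimage continuous_subtype_val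
  have hpN : p ∈ N := by
    constructor
    · rw [← hx₀]; simpa using hδpos
    · have : |y₀ * Real.sin x₀ - y₀ * Real.sin x₀| = 0 := by simp
      rw [this]
      have : 0 < |Real.sin x₀ * Real.sin x₀| := abs_pos.2 (mul_ne_zero hsin0 hsin0)
      positivity
  have hNU : N ⊆ U := by
    intro q hq
    obtain ⟨hx1, hcond⟩ := hq
    set x := q.1.1
    set y := q.1.2
    rw [← hVU]
    apply hball
    rw [Metric.mem_ball, Prod.dist_eq, sup_lt_iff, Real.dist_eq, Real.dist_eq]
    constructor
    · linarith
    · -- |y - y₀| < ε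
      have htri : |y - y₀| * m ≤ |y * Real.sin x₀ - y₀ * Real.sin x| +
          |y₀| * |Real.sin x - Real.sin x₀| := by
        have h := abs_add_le (y * Real.sin x₀ - y₀ * Real.sin x)
          (y₀ * (Real.sin x - Real.sin x₀))
        rw [abs_mul y₀] at h
        calc |y - y₀| * m = |(y - y₀) * Real.sin x₀| := by rw [abs_mul]
          _ = |(y * Real.sin x₀ - y₀ * Real.sin x) + y₀ * (Real.sin x - Real.sin x₀)| := by
              congr 1; ring
          _ ≤ _ := h
      have h2 : |y₀| * |Real.sin x - Real.sin x₀| ≤ |y₀| * δ :=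
        mul_le_mul_of_nonneg_left (le_of_lt (lt_of_le_of_lt (sin_lip x x₀) hx1)) (abs_nonneg _)
      have h3 : |y * Real.sin x₀ - y₀ * Real.sin x| < η * m := by
        refine lt_of_lt_of_le hcond ?_
        rw [abs_mul]
        have hs1 : |Real.sin x| ≤ 1 := Real.abs_sin_le_one x
        rw [← hm_def]
        nlinarith [mul_nonneg (mul_nonneg hηpos.le (sub_nonneg.2 hs1)) hm.le]
      have h1 : |y - y₀| * m < η * m + |y₀| * δ := by linarith
      have hδy' : δ * (2 * (|y₀| + 1)) ≤ ε * m := (le_div_iff₀ (by positivity)).1 hδy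
      have hη2 : 2 * η = ε := by rw [hη_def]; ring
      show |y - y₀| < ε
      nlinarith [abs_nonneg (y - y₀), abs_nonneg y₀, hm, hδpos.le, h1, hδy', hη2]
  -- the punctured neighborhood is connected
  set s₀ := y₀ / Real.sin x₀ with hs₀_def
  have hy₀eq : y₀ = s₀ * Real.sin x₀ := by
    rw [hs₀_def]; exact (div_mul_cancel₀ y₀ hsin0).symm
  have hs₀mem : s₀ ∈ Set.Icc (-1 : ℝ) 1 := by
    rw [Set.mem_Icc, ← abs_le, hs₀_def, abs_div, div_le_one hm]
    exact p.2
  set c : ℝ × ℝ := (x₀, s₀) with hc_def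
  set J : Set ℝ := Set.Ioo (s₀ - η) (s₀ + η) ∩ Set.Icc (-1) 1 with hJ_def
  set K : Set (ℝ × ℝ) := Set.Ioo (x₀ - δ) (x₀ + δ) ×ˢ J with hK_def
  have hKconv : Convex ℝ K := (convex_Ioo _ _).prod ((convex_Ioo _ _).inter (convex_Icc _ _))
  have hs₀J : s₀ ∈ J := ⟨⟨by linarith, by linarith⟩, hs₀mem⟩
  set t := min η 1 / 2 with ht_def
  have htpos : 0 < t := by positivity
  have ht1 : t ≤ 1 / 2 := by
    rw [ht_def]; have := min_le_right η 1; linarith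
  have htη : t < η := by
    rw [ht_def]; have := min_le_left η 1; linarith
  set u₂ := if 0 ≤ s₀ then s₀ - t else s₀ + t with hu₂_def
  have hu₂J : u₂ ∈ J := by
    rw [hu₂_def]
    obtain ⟨hsl, hsu⟩ := hs₀mem
    split_ifs with h
    · exact ⟨⟨by linarith, by linarith⟩, by constructor <;> linarith⟩
    · exact ⟨⟨by linarith, by linarith⟩, by constructor <;> linarith⟩
  have hu₂ne : s₀ ≠ u₂ := by
    rw [hu₂_def]; split_ifs with h <;> intro hcon <;> nlinarith
  set P₁ : ℝ × ℝ := (x₀ + δ / 2, s₀) with hP₁_def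
  set P₂ : ℝ × ℝ := (x₀ + δ / 2, u₂) with hP₂_def
  have hP₁K : P₁ ∈ K := ⟨⟨by simp [hP₁_def]; linarith, by simp [hP₁_def]; linarith⟩, hs₀J⟩
  have hP₂K : P₂ ∈ K := ⟨⟨by simp [hP₂_def]; linarith, by simp [hP₂_def]; linarith⟩, hu₂J⟩
  have hpc : IsPathConnected (K \ {c}) :=
    punctured_convex K hKconv c P₁ P₂ hP₁K hP₂K rfl hu₂ne (by simp [hc_def, hP₁_def]; linarith)
  -- the map g
  set g : ℝ × ℝ → ℝ × ℝ := fun q => (q.1, q.2 * Real.sin q.1) with hg_def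
  have hgcont : Continuous g := by fun_prop
  have himg : Subtype.val '' (N \ {p}) = g '' (K \ {c}) := by
    ext z
    constructor
    · rintro ⟨q, ⟨⟨hx1, hcond⟩, hqp⟩, rfl⟩
      set x := q.1.1 with hx_def
      set y := q.1.2 with hy_def
      have hsx : Real.sin x ≠ 0 := hsnz x hx1
      refine ⟨(x, y / Real.sin x), ⟨⟨?_, ?_, ?_⟩, ?_⟩, ?_⟩
      · rw [Set.mem_Ioo]; constructor <;> [linarith [abs_lt.1 hx1|>.1]; linarith [abs_lt.1 hx1|>.2]]
      · -- y / sin x ∈ Ioo (s₀ - η) (s₀ + η)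
        have heq : y / Real.sin x - s₀ =
            (y * Real.sin x₀ - y₀ * Real.sin x) / (Real.sin x * Real.sin x₀) := by
          rw [hs₀_def]; field_simp
        have : |y / Real.sin x - s₀| < η := by
          rw [heq, abs_div]
          exact (div_lt_iff₀ (abs_pos.2 (mul_ne_zero hsx hsin0))).2 hcond
        have h' := abs_lt.1 this
        exact ⟨by linarith [h'.1], by linarith [h'.2]⟩
      · rw [Set.mem_Icc, ← abs_le, abs_div, div_le_one (abs_pos.2 hsx)]
        exact q.2
      · intro hmem
        rw [Set.mem_singleton_iff, hc_def, Prod.ext_iff] at hmem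
        obtain ⟨he1, he2⟩ := hmem
        apply hqp
        show q = p
        apply Subtype.ext
        apply Prod.ext
        · exact he1
        · simp only at he1 he2
          show y = y₀
          have h5 : y = s₀ * Real.sin x := by
            rw [← he2, div_mul_cancel₀ _ hsx]
          rw [h5, he1]
          exact hy₀eq.symm
      · simp only [hg_def]
        exact Prod.ext rfl (div_mul_cancel₀ y hsx)
    · rintro ⟨⟨x, s⟩, ⟨⟨hxI, hsIoo, hsIcc⟩, hne⟩, rfl⟩
      rw [Set.mem_Ioo] at hxI
      have hxd : |x - x₀| < δ := abs_lt.2 ⟨by linarith [hxI.1], by linarith [hxI.2]⟩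
      have hsx : Real.sin x ≠ 0 := hsnz x hxd
      have hmem : |(x, s * Real.sin x).2| ≤ |Real.sin (x, s * Real.sin x).1| := by
        simp only [abs_mul]
        have : |s| ≤ 1 := abs_le.2 hsIcc
        nlinarith [abs_nonneg (Real.sin x)]
      refine ⟨⟨(x, s * Real.sin x), hmem⟩, ⟨⟨?_, ?_⟩, ?_⟩, rfl⟩
      · exact hxd
      · show |s * Real.sin x * Real.sin x₀ - y₀ * Real.sin x| <
          η * |Real.sin x * Real.sin x₀|
        have heq : s * Real.sin x * Real.sin x₀ - y₀ * Real.sin x =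
            (s - s₀) * (Real.sin x * Real.sin x₀) := by rw [hy₀eq]; ring
        rw [heq, abs_mul]
        have hss : |s - s₀| < η := abs_lt.2 ⟨by linarith [hsIoo.1], by linarith [hsIoo.2]⟩
        exact mul_lt_mul_of_pos_right hss (abs_pos.2 (mul_ne_zero hsx hsin0))
      · intro hmem2
        change _ = p at hmem2
        apply hne
        rw [Set.mem_singleton_iff, hc_def, Prod.ext_iff]
        have hval : ((x, s * Real.sin x) : ℝ × ℝ) = p.1 := by
          rw [← hmem2]
        rw [Prod.ext_iff] at hval
        obtain ⟨he1, he2⟩ := hval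
        simp only at he1 he2
        refine ⟨he1, ?_⟩
        rw [he1] at he2
        show s = y₀ / Real.sin x₀
        exact (eq_div_iff hsin0).2 he2
  have hconn : IsConnected (g '' (K \ {c})) :=
    hpc.isConnected.image g hgcont.continuousOn
  rw [← himg] at hconn
  refine ⟨N, hNopen, hpN, hNU, ?_, ?_⟩
  · exact Set.image_nonempty.mp hconn.nonempty
  · exact Topology.IsInducing.subtypeVal.isPreconnected_image.mp hconn.isPreconnected
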